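/- Let a > -1, b > 0, γ̄ > 0 and γ₀ > 0, and let f_γ(t) = t^{(a-1)/2} exp(-√t/(b√γ̄)) / (2 b^{a+1} Γ(a+1) γ̄^{(a+1)/2}) for t > 0 be the density of the end-to-end SNR. Then the ergodic capacity with full CSI and water-filling cutoff γ₀ satisfies C = (1/ln 2) ∫_{γ₀}^∞ ln(t/γ₀) f_γ(t) dt = (2/(ln 2 · Γ(a+1))) ∫_{u₀}^∞ u^a e^{-u} ln(u/u₀) du, where u₀ = √γ₀/(b√γ̄), and both integrals are finite. -/

import Mathlib

open MeasureTheory Real Set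

/-- With `a > -1`, `b > 0`, `γ̄ > 0` and water-filling cutoff `γ₀ > 0`,
the ergodic capacity with full CSI against the SNR density
`f_γ(t) = t^((a-1)/2) exp(-√t/(b√γ̄)) / (2 b^(a+1) Γ(a+1) γ̄^((a+1)/2))` satisfies
`(1/ln 2) ∫_{γ₀}^∞ ln(t/γ₀) f_γ(t) dt = (2/(ln 2 · Γ(a+1))) ∫_{u₀}^∞ u^a e^(-u) ln(u/u₀) du`
with `u₀ = √γ₀/(b√γ̄)`, and both integrals are finite. -/
theorem ergodic_capacity_with_csi
    (a b γbar γ₀ : ℝ) (ha : -1 < a) (hb : 0 < b) (hγbar : 0 < γbar) (hγ₀ : 0 < γ₀) :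
    IntegrableOn (fun t =>
        Real.log (t / γ₀) *
          (t ^ ((a - 1) / 2) * Real.exp (-Real.sqrt t / (b * Real.sqrt γbar)) /
            (2 * b ^ (a + 1) * Real.Gamma (a + 1) * γbar ^ ((a + 1) / 2))))
      (Set.Ioi γ₀) volume ∧
    IntegrableOn (fun u =>
        u ^ a * Real.exp (-u) * Real.log (u / (Real.sqrt γ₀ / (b * Real.sqrt γbar))))
      (Set.Ioi (Real.sqrt γ₀ / (b * Real.sqrt γbar))) volume ∧
    (1 / Real.log 2) *
        (∫ t in Set.Ioi γ₀,
          Real.log (t / γ₀) *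
            (t ^ ((a - 1) / 2) * Real.exp (-Real.sqrt t / (b * Real.sqrt γbar)) /
              (2 * b ^ (a + 1) * Real.Gamma (a + 1) * γbar ^ ((a + 1) / 2)))) =
      (2 / (Real.log 2 * Real.Gamma (a + 1))) *
        ∫ u in Set.Ioi (Real.sqrt γ₀ / (b * Real.sqrt γbar)),
          u ^ a * Real.exp (-u) * Real.log (u / (Real.sqrt γ₀ / (b * Real.sqrt γbar))) := by
  set c : ℝ := b * Real.sqrt γbar with hcdef
  have hc : 0 < c := mul_pos hb (Real.sqrt_pos.mpr hγbar)
  set u₀ : ℝ := Real.sqrt γ₀ / c with hu₀def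
  have hu₀ : 0 < u₀ := div_pos (Real.sqrt_pos.mpr hγ₀) hc
  have hΓ : 0 < Real.Gamma (a + 1) := Real.Gamma_pos_of_pos (by linarith)
  have hγ₀eq : γ₀ = c ^ 2 * u₀ ^ 2 := by
    rw [hu₀def]
    field_simp
    rw [Real.sq_sqrt hγ₀.le]
  set g : ℝ → ℝ := fun t =>
        Real.log (t / γ₀) *
          (t ^ ((a - 1) / 2) * Real.exp (-Real.sqrt t / c) /
            (2 * b ^ (a + 1) * Real.Gamma (a + 1) * γbar ^ ((a + 1) / 2))) with hgdef
  set h : ℝ → ℝ := fun u => u ^ a * Real.exp (-u) * Real.log (u / u₀) with hhdef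
  -- integrability of h
  have hh_int : IntegrableOn h (Set.Ioi u₀) volume := by
    have hmaj : IntegrableOn (fun u : ℝ => (1 / u₀) * (Real.exp (-u) * u ^ (a + 1)))
        (Set.Ioi u₀) volume := by
      have h1 := (Real.GammaIntegral_convergent (show (0:ℝ) < a + 2 by linarith)).mono_set
        (Set.Ioi_subset_Ioi hu₀.le)
      have h2 : IntegrableOn (fun u : ℝ => Real.exp (-u) * u ^ (a + 1)) (Set.Ioi u₀) volume := by
        simpa [show a + 2 - 1 = a + 1 by ring] using h1
      exact h2.const_mul _
    refine hmaj.integrable.mono' ?_ ?_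
    · refine ContinuousOn.aestronglyMeasurable ?_ measurableSet_Ioi
      have hcont : ∀ x ∈ Set.Ioi u₀, (0:ℝ) < x := fun x hx => lt_trans hu₀ hx
      exact ((ContinuousOn.rpow_const continuousOn_id
          (fun x hx => Or.inl (hcont x hx).ne')).mul
          ((Real.continuous_exp.comp continuous_neg).continuousOn)).mul
        (ContinuousOn.log (continuousOn_id.div_const u₀)
          (fun x hx => (div_pos (hcont x hx) hu₀).ne'))
    · filter_upwards [ae_restrict_mem measurableSet_Ioi] with u hu
      have hu0 : (0:ℝ) < u := lt_trans hu₀ hu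
      have h1 : (1:ℝ) < u / u₀ := (one_lt_div hu₀).mpr hu
      have hlog0 : 0 ≤ Real.log (u / u₀) := Real.log_nonneg h1.le
      have hlogle : Real.log (u / u₀) ≤ u / u₀ := by
        have := Real.log_le_sub_one_of_pos (show (0:ℝ) < u / u₀ by positivity)
        linarith
      have hpos : 0 ≤ u ^ a * Real.exp (-u) := by positivity
      simp only [hhdef]
      rw [Real.norm_eq_abs, abs_of_nonneg (mul_nonneg hpos hlog0)]
      calc u ^ a * Real.exp (-u) * Real.log (u / u₀)
          ≤ u ^ a * Real.exp (-u) * (u / u₀) := mul_le_mul_of_nonneg_left hlogle hpos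
        _ = (1 / u₀) * (Real.exp (-u) * (u ^ a * u)) := by ring
        _ = (1 / u₀) * (Real.exp (-u) * u ^ (a + 1)) := by
            rw [show u ^ a * u = u ^ (a + 1) from (Real.rpow_add_one hu0.ne' a).symm]
  -- change of variables setup
  set f : ℝ → ℝ := fun u => c ^ 2 * u ^ 2 with hfdef
  have hderiv : ∀ x ∈ Set.Ioi u₀, HasDerivWithinAt f (c ^ 2 * (2 * x)) (Set.Ioi u₀) x := by
    intro x hx
    have : HasDerivAt f (c ^ 2 * (2 * x)) x := by
      simpa using (hasDerivAt_pow 2 x).const_mul (c ^ 2)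
    exact this.hasDerivWithinAt
  have hinj : Set.InjOn f (Set.Ioi u₀) := by
    intro x hx y hy hxy
    simp only [hfdef] at hxy
    have hx' : u₀ < x := hx
    have hy' : u₀ < y := hy
    have hx2 : x ^ 2 = y ^ 2 := mul_left_cancel₀ (show (c:ℝ) ^ 2 ≠ 0 by positivity) hxy
    nlinarith
  have himg : f '' Set.Ioi u₀ = Set.Ioi γ₀ := by
    ext t
    constructor
    · rintro ⟨u, hu, rfl⟩
      have hu' : u₀ < u := hu
      simp only [hfdef, Set.mem_Ioi]
      rw [hγ₀eq]
      have : u₀ ^ 2 < u ^ 2 := by nlinarith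
      exact (mul_lt_mul_iff_right₀ (by positivity)).mpr this
    · intro ht
      have ht' : γ₀ < t := ht
      refine ⟨Real.sqrt t / c, ?_, ?_⟩
      · simp only [Set.mem_Ioi, hu₀def]
        gcongr
      · simp only [hfdef]
        field_simp
        exact Real.sq_sqrt (by linarith)
  -- key pointwise identity
  have key : ∀ x ∈ Set.Ioi u₀,
      |c ^ 2 * (2 * x)| • g (f x) = (2 / Real.Gamma (a + 1)) * h x := by
    intro x hx
    have hx0 : (0:ℝ) < x := lt_trans hu₀ hx
    have hsq : Real.sqrt (c ^ 2 * x ^ 2) = c * x := by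
      rw [show c ^ 2 * x ^ 2 = (c * x) ^ 2 by ring, Real.sqrt_sq (by positivity)]
    have hrp : (c ^ 2 * x ^ 2) ^ ((a - 1) / 2) = c ^ (a - 1) * x ^ (a - 1) := by
      rw [show c ^ 2 * x ^ 2 = (c * x) ^ 2 by ring, ← Real.rpow_natCast (c * x) 2,
        ← Real.rpow_mul (by positivity),
        show ((2:ℕ):ℝ) * ((a - 1) / 2) = a - 1 by push_cast; ring]
      exact Real.mul_rpow hc.le hx0.le
    have hden : 2 * b ^ (a + 1) * Real.Gamma (a + 1) * γbar ^ ((a + 1) / 2)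
        = 2 * c ^ (a + 1) * Real.Gamma (a + 1) := by
      have hs : (Real.sqrt γbar) ^ (a + 1) = γbar ^ ((a + 1) / 2) := by
        rw [Real.sqrt_eq_rpow, ← Real.rpow_mul hγbar.le,
          show 1 / 2 * (a + 1) = (a + 1) / 2 by ring]
      rw [hcdef, Real.mul_rpow hb.le (Real.sqrt_nonneg _), hs]
      ring
    have hlog : Real.log (c ^ 2 * x ^ 2 / γ₀) = 2 * Real.log (x / u₀) := by
      rw [show c ^ 2 * x ^ 2 / γ₀ = (x / u₀) ^ 2 by
        rw [hγ₀eq]; field_simp]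
      rw [Real.log_pow]
      norm_num
    have hc3 : c ^ (a + 1) = c ^ (a - 1) * c ^ 2 := by
      rw [← Real.rpow_natCast c 2, ← Real.rpow_add hc]
      congr 1
      push_cast
      ring
    have hx3 : x ^ a = x ^ (a - 1) * x := by
      rw [show a = a - 1 + 1 by ring, Real.rpow_add_one hx0.ne']
      rw [show a - 1 + 1 - 1 = a - 1 by ring]
    rw [smul_eq_mul, abs_of_pos (by positivity)]
    simp only [hgdef, hfdef, hhdef]
    rw [hsq, hrp, hden, hlog, show -(c * x) / c = -x from by rw [neg_div, mul_comm c x, mul_div_assoc, div_self hc.ne', mul_one], hc3, hx3]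
    have hΓ' : Real.Gamma (a + 1) ≠ 0 := hΓ.ne'
    have hca : c ^ (a - 1) ≠ 0 := (Real.rpow_pos_of_pos hc _).ne'
    field_simp
  -- apply change of variables
  have hsub := integral_image_eq_integral_abs_deriv_smul measurableSet_Ioi hderiv hinj g
  have hint_iff := integrableOn_image_iff_integrableOn_abs_deriv_smul measurableSet_Ioi
    hderiv hinj g
  rw [himg] at hsub hint_iff
  have hrhs_int : IntegrableOn (fun x => |c ^ 2 * (2 * x)| • g (f x)) (Set.Ioi u₀) volume :=
    IntegrableOn.congr_fun (hh_int.const_mul (2 / Real.Gamma (a + 1)))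
      (fun x hx => (key x hx).symm) measurableSet_Ioi
  have hg_int : IntegrableOn g (Set.Ioi γ₀) volume := hint_iff.mpr hrhs_int
  refine ⟨hg_int, hh_int, ?_⟩
  rw [hsub, setIntegral_congr_fun measurableSet_Ioi key, MeasureTheory.integral_const_mul]
  have hΓ' : Real.Gamma (a + 1) ≠ 0 := hΓ.ne'
  have hl2 : Real.log 2 ≠ 0 := (Real.log_pos (by norm_num)).ne'
  field_simp
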